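/- (Support optimality condition.) Let f: R^d → R be convex and differentiable, P = conv{p₁,…,p_m} with 0 ∈ P, and φ: [0,∞) → R convex, monotonically nondecreasing. Let x* minimize f(x) + φ(κ_P(x)) and write x* = Σ_i c_i p_i with c_i ≥ 0 and Σ_i c_i = κ_P(x*). Then for every index i with c_i > 0, one has ⟨−∇f(x*), p_i⟩ = σ_P(−∇f(x*)). -/

import Mathlib

open scoped RealInnerProductSpace Pointwise
noncomputable section

/-- Minkowski gauge `κ_P(x) = inf {μ ≥ 0 : x ∈ μ • P}` (real-valued). -/
def gaugeR {d : ℕ} (P : Set (EuclideanSpace ℝ (Fin d)))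
    (x : EuclideanSpace ℝ (Fin d)) : ℝ :=
  sInf {μ : ℝ | 0 ≤ μ ∧ x ∈ μ • P}

/-- Support function `σ_P(z) = sup_{s ∈ P} ⟨z, s⟩`. -/
def suppFn {d : ℕ} (P : Set (EuclideanSpace ℝ (Fin d)))
    (z : EuclideanSpace ℝ (Fin d)) : ℝ :=
  sSup ((fun s => ⟪z, s⟫) '' P)

/-- Support optimality condition: if `x*` minimizes `f + φ ∘ κ_P` over `ℝ^d`, where
`P = conv{p₁, …, p_m} ∋ 0`, `f` is convex differentiable with gradient `f'`, and
`φ` is convex and nondecreasing on `[0,∞)`, then for any gauge-attaining conic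
decomposition `x* = Σ cᵢ pᵢ` (`cᵢ ≥ 0`, `Σ cᵢ = κ_P(x*)`), every atom `pᵢ` with
`cᵢ > 0` satisfies `⟨−∇f(x*), pᵢ⟩ = σ_P(−∇f(x*))`. -/
theorem support_optimality {d m : ℕ} (p : Fin m → EuclideanSpace ℝ (Fin d))
    (f : EuclideanSpace ℝ (Fin d) → ℝ) (f' : EuclideanSpace ℝ (Fin d) → EuclideanSpace ℝ (Fin d))
    (φ : ℝ → ℝ) (xstar : EuclideanSpace ℝ (Fin d)) (c : Fin m → ℝ)
    (P : Set (EuclideanSpace ℝ (Fin d))) (hP : P = convexHull ℝ (Set.range p))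
    (h0 : (0 : EuclideanSpace ℝ (Fin d)) ∈ P)
    (hfconv : ConvexOn ℝ Set.univ f)
    (hfgrad : ∀ x, HasGradientAt f (f' x) x)
    (hφconv : ConvexOn ℝ (Set.Ici (0 : ℝ)) φ)
    (hφmono : MonotoneOn φ (Set.Ici (0 : ℝ)))
    (hmin : ∀ y, f xstar + φ (gaugeR P xstar) ≤ f y + φ (gaugeR P y))
    (hc : ∀ i, 0 ≤ c i)
    (hdecomp : ∑ i, c i • p i = xstar)
    (hattain : ∑ i, c i = gaugeR P xstar) :
    ∀ i, 0 < c i → ⟪-(f' xstar), p i⟫ = suppFn P (-(f' xstar)) := by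

  intro i hci
  set z := -(f' xstar) with hz
  have hPconv : Convex ℝ P := hP ▸ convex_convexHull ℝ _
  have hpmem : ∀ k, p k ∈ P := fun k => hP ▸ subset_convexHull ℝ _ ⟨k, rfl⟩
  -- gauge is at most any conic decomposition's total weight
  have gauge_le : ∀ (c' : Fin m → ℝ), (∀ k, 0 ≤ c' k) →
      gaugeR P (∑ k, c' k • p k) ≤ ∑ k, c' k := by
    intro c' hc'
    set μ := ∑ k, c' k with hμ
    have hμ0 : 0 ≤ μ := Finset.sum_nonneg fun k _ => hc' k
    have hmemset : μ ∈ {ν : ℝ | 0 ≤ ν ∧ (∑ k, c' k • p k) ∈ ν • P} := by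
      refine ⟨hμ0, ?_⟩
      rcases eq_or_lt_of_le hμ0 with h0' | hpos
      · have hall : ∀ k ∈ Finset.univ, c' k = 0 :=
          (Finset.sum_eq_zero_iff_of_nonneg (fun k _ => hc' k)).mp h0'.symm
        have hx0 : (∑ k, c' k • p k) = 0 := by
          apply Finset.sum_eq_zero
          intro k hk; rw [hall k hk, zero_smul]
        rw [hx0, ← h0']
        exact ⟨0, h0, smul_zero 0⟩
      · have hsum1 : ∑ k, c' k / μ = 1 := by
          rw [← Finset.sum_div, ← hμ, div_self hpos.ne']
        have hcombo : (∑ k, (c' k / μ) • p k) ∈ P :=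
          hPconv.sum_mem (fun k _ => div_nonneg (hc' k) hμ0) hsum1 (fun k _ => hpmem k)
        have := Set.smul_mem_smul_set (a := μ) hcombo
        have heq : μ • ∑ k, (c' k / μ) • p k = ∑ k, c' k • p k := by
          rw [Finset.smul_sum]
          congr 1; funext k
          rw [smul_smul, mul_div_cancel₀ _ hpos.ne']
        rwa [heq] at this
    exact csInf_le ⟨0, fun a ha => ha.1⟩ hmemset
  have gauge_nonneg : ∀ y, 0 ≤ gaugeR P y := fun y =>
    Real.sInf_nonneg (fun a ha => ha.1)
  -- key inequality : ⟪z, p j⟫ ≤ ⟪z, p i⟫ for all j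
  have key : ∀ j, ⟪z, p j⟫ ≤ ⟪z, p i⟫ := by
    intro j
    set v := p j - p i with hv
    -- values along the curve
    have hval : ∀ t ∈ Set.Ioo (0:ℝ) (c i), f xstar ≤ f (xstar + t • v) := by
      intro t ht
      set c' : Fin m → ℝ := fun k =>
        c k + (if k = j then t else 0) - (if k = i then t else 0) with hc'def
      obtain ⟨ht1, ht2⟩ := ht
      have hc'nn : ∀ k, 0 ≤ c' k := by
        intro k
        by_cases hki : k = i
        · by_cases hkj : k = j
          · simp only [hc'def, if_pos hki, if_pos hkj]
            linarith [hc k]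
          · simp only [hc'def, if_pos hki, if_neg hkj]
            rw [hki]
            linarith [hc i]
        · by_cases hkj : k = j
          · simp only [hc'def, if_pos hkj, if_neg hki]
            linarith [hc k]
          · simp only [hc'def, if_neg hki, if_neg hkj]
            linarith [hc k]
      have hsum' : ∑ k, c' k = ∑ k, c k := by
        simp only [hc'def]
        rw [Finset.sum_sub_distrib, Finset.sum_add_distrib,
          Finset.sum_ite_eq' Finset.univ j (fun _ => t),
          Finset.sum_ite_eq' Finset.univ i (fun _ => t)]
        simp
      have hpt : ∑ k, c' k • p k = xstar + t • v := by
        simp only [hc'def, sub_smul, add_smul, ite_smul, zero_smul]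
        rw [Finset.sum_sub_distrib, Finset.sum_add_distrib,
          Finset.sum_ite_eq' Finset.univ j (fun k => t • p k),
          Finset.sum_ite_eq' Finset.univ i (fun k => t • p k)]
        simp only [Finset.mem_univ, if_pos, hdecomp, hv, smul_sub]
        abel
      have hg1 : gaugeR P (xstar + t • v) ≤ gaugeR P xstar := by
        calc gaugeR P (xstar + t • v) = gaugeR P (∑ k, c' k • p k) := by rw [hpt]
          _ ≤ ∑ k, c' k := gauge_le c' hc'nn
          _ = ∑ k, c k := hsum'
          _ = gaugeR P xstar := hattain
      have hφle : φ (gaugeR P (xstar + t • v)) ≤ φ (gaugeR P xstar) :=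
        hφmono (gauge_nonneg _) (gauge_nonneg _) hg1
      have := hmin (xstar + t • v)
      linarith
    -- derivative of t ↦ f (xstar + t • v) at 0
    have hF := (hfgrad xstar).hasFDerivAt
    have hcurve : HasDerivAt (fun t : ℝ => xstar + t • v) v 0 := by
      simpa using ((hasDerivAt_id (0:ℝ)).smul_const v).const_add xstar
    have hg : HasDerivAt (fun t : ℝ => f (xstar + t • v)) ⟪f' xstar, v⟫ 0 := by
      have hF' : HasFDerivAt f ((InnerProductSpace.toDual ℝ (EuclideanSpace ℝ (Fin d))) (f' xstar))
          (xstar + (0:ℝ) • v) := by simpa using hF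
      have h := hF'.comp_hasDerivAt 0 hcurve
      simp at h
      exact h
    have hD : 0 ≤ ⟪f' xstar, v⟫ := by
      have htend : Filter.Tendsto (slope (fun t : ℝ => f (xstar + t • v)) 0)
          (nhdsWithin 0 (Set.Ioi 0)) (nhds ⟪f' xstar, v⟫) :=
        (hasDerivAt_iff_tendsto_slope.mp hg).mono_left
          (nhdsWithin_mono 0 (fun x hx => ne_of_gt hx))
      refine ge_of_tendsto htend ?_
      have hmem : Set.Ioo (0:ℝ) (c i) ∈ nhdsWithin (0:ℝ) (Set.Ioi 0) :=
        Ioo_mem_nhdsGT_of_mem ⟨le_refl 0, hci⟩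
      filter_upwards [hmem] with t ht
      have hval' := hval t ⟨ht.1, ht.2⟩
      rw [slope_def_field]
      simp only [zero_smul, add_zero] at hval' ⊢
      have : (0:ℝ) < t - 0 := by simpa using ht.1
      rw [div_nonneg_iff]
      left
      constructor
      · simpa using sub_nonneg.mpr hval'
      · linarith
    have : ⟪z, v⟫ ≤ 0 := by
      rw [hz, inner_neg_left]
      linarith
    rw [hv, inner_sub_right] at this
    linarith
  -- upper bound on P
  have hub : ∀ s ∈ P, ⟪z, s⟫ ≤ ⟪z, p i⟫ := by
    rw [hP]
    intro s hs
    have hconvset : Convex ℝ {w : EuclideanSpace ℝ (Fin d) | ⟪z, w⟫ ≤ ⟪z, p i⟫} :=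
      convex_halfSpace_le ⟨fun a b => inner_add_right z a b,
        fun r a => real_inner_smul_right z a r⟩ _
    have hsub : Set.range p ⊆ {w : EuclideanSpace ℝ (Fin d) | ⟪z, w⟫ ≤ ⟪z, p i⟫} := by
      rintro w ⟨j, rfl⟩; exact key j
    exact convexHull_min hsub hconvset hs
  have hne : ((fun s => ⟪z, s⟫) '' P).Nonempty := ⟨_, ⟨p i, hpmem i, rfl⟩⟩
  have hub' : ∀ y ∈ ((fun s => ⟪z, s⟫) '' P), y ≤ ⟪z, p i⟫ := by
    rintro y ⟨s, hs, rfl⟩; exact hub s hs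
  have hbdd : BddAbove ((fun s => ⟪z, s⟫) '' P) := ⟨⟪z, p i⟫, hub'⟩
  refine le_antisymm (le_csSup hbdd ⟨p i, hpmem i, rfl⟩) (csSup_le hne hub')
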